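/- Let B and C be commuting Hermitian n×n complex matrices and let μ be a finite Borel measure on ℂⁿ with μ({0}) = 0. Define g : ℝ → ℝ by g(t) = ∫ (‖exp(C + t·B)·z‖²/‖z‖²) dμ(z), where exp denotes the matrix exponential and ‖·‖ the Euclidean norm on ℂⁿ. If g has derivative 0 at t = 0 and derivative 0 at t = 1, then B·z = 0 for μ-almost every z, and consequently g is constant on ℝ. -/

import Mathlib

open Matrix MeasureTheory NormedSpace
open scoped InnerProductSpace Nat Matrix.Norms.L2Operator

section aux

variable {E : Type*} [NormedAddCommGroup E] [InnerProductSpace ℂ E] [CompleteSpace E]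

noncomputable instance : NormedAlgebra ℚ (E →L[ℂ] E) := .restrictScalars ℚ ℂ _

/-- The operator-valued curve `t ↦ exp (c + t • b)`. -/
noncomputable def eee (b c : E →L[ℂ] E) (t : ℝ) : E →L[ℂ] E := exp (c + t • b)

/-- The first derivative of the quadratic form `t ↦ ‖eee b c t z‖²`. -/
noncomputable def psi (b c : E →L[ℂ] E) (z : E) (t : ℝ) : ℝ :=
  2 * RCLike.re (⟪eee b c t z, eee b c t (b z)⟫_ℂ)

lemma aux_hasDerivAt_exp (b c : E →L[ℂ] E) (hbc : Commute b c) (t : ℝ) :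
    HasDerivAt (fun s : ℝ => eee b c s) (b * eee b c t) t := by
  have hsplit : ∀ s : ℝ, eee b c s = exp c * exp (s • b) := fun s =>
    exp_add_of_commute (hbc.symm.smul_right s)
  have h1 : HasDerivAt (fun s : ℝ => exp (s • b)) (b * exp (t • b)) t :=
    hasDerivAt_exp_smul_const' b t
  have h2 := h1.const_mul (exp c)
  have hval : exp c * (b * exp (t • b)) = b * eee b c t := by
    rw [hsplit t, ← mul_assoc, ← (hbc.exp_right).eq, mul_assoc]
  simp only [← hsplit] at h2
  rw [← hval]
  exact h2

lemma aux_comm_eee (b c : E →L[ℂ] E) (hbc : Commute b c) (t : ℝ) (w : E) :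
    b (eee b c t w) = eee b c t (b w) := by
  have h : Commute b (c + t • b) := hbc.add_right ((Commute.refl b).smul_right t)
  have h2 : b * eee b c t = eee b c t * b := h.exp_right.eq
  have := DFunLike.congr_fun h2 w
  simpa [ContinuousLinearMap.mul_apply] using this

lemma aux_hasDerivAt_apply (b c : E →L[ℂ] E) (hbc : Commute b c) (w : E) (t : ℝ) :
    HasDerivAt (fun s : ℝ => eee b c s w) (eee b c t (b w)) t := by
  have h := (ContinuousLinearMap.restrictScalars ℝ
      ((ContinuousLinearMap.apply ℂ E) w)).hasFDerivAt.comp_hasDerivAt t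
    (aux_hasDerivAt_exp b c hbc t)
  simpa [Function.comp_def, ContinuousLinearMap.mul_apply,
    aux_comm_eee b c hbc t w] using h

/-- selfadjoint move -/
lemma aux_adj (b : E →L[ℂ] E) (hb : star b = b) (x y : E) :
    ⟪b x, y⟫_ℂ = ⟪x, b y⟫_ℂ := by
  conv_lhs => rw [← hb]
  rw [ContinuousLinearMap.star_eq_adjoint, ContinuousLinearMap.adjoint_inner_left]

lemma aux_hasDerivAt_normsq (b c : E →L[ℂ] E) (hbc : Commute b c) (z : E) (t : ℝ) :
    HasDerivAt (fun s : ℝ => ‖eee b c s z‖ ^ 2) (psi b c z t) t := by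
  have hw := aux_hasDerivAt_apply b c hbc z t
  have hinner := HasDerivAt.inner ℂ hw hw
  have hre := (RCLike.reCLM (K := ℂ)).hasFDerivAt.comp_hasDerivAt t hinner
  have hfun : (fun s : ℝ => RCLike.reCLM (K := ℂ) (⟪eee b c s z, eee b c s z⟫_ℂ))
      = fun s : ℝ => ‖eee b c s z‖ ^ 2 := funext fun s => by
    rw [RCLike.reCLM_apply]; exact inner_self_eq_norm_sq _
  rw [Function.comp_def, hfun] at hre
  have hval : RCLike.reCLM (K := ℂ)
      (⟪eee b c t z, eee b c t (b z)⟫_ℂ + ⟪eee b c t (b z), eee b c t z⟫_ℂ) = psi b c z t := by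
    simp only [map_add, psi, RCLike.reCLM_apply]
    rw [inner_re_symm (𝕜 := ℂ) (eee b c t (b z))]
    ring
  rwa [hval] at hre

lemma aux_hasDerivAt_psi (b c : E →L[ℂ] E) (hb : star b = b) (hbc : Commute b c) (z : E) (t : ℝ) :
    HasDerivAt (fun s : ℝ => psi b c z s) (4 * ‖eee b c t (b z)‖ ^ 2) t := by
  have hw := aux_hasDerivAt_apply b c hbc z t
  have hwb := aux_hasDerivAt_apply b c hbc (b z) t
  have hinner := HasDerivAt.inner ℂ hw hwb
  have hre := (RCLike.reCLM (K := ℂ)).hasFDerivAt.comp_hasDerivAt t hinner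
  have hre2 := hre.const_mul (2 : ℝ)
  rw [Function.comp_def] at hre2
  have hval : 2 * RCLike.reCLM (K := ℂ)
      (⟪eee b c t z, eee b c t (b (b z))⟫_ℂ + ⟪eee b c t (b z), eee b c t (b z)⟫_ℂ)
      = 4 * ‖eee b c t (b z)‖ ^ 2 := by
    have h1 : ⟪eee b c t z, eee b c t (b (b z))⟫_ℂ = ⟪eee b c t (b z), eee b c t (b z)⟫_ℂ := by
      rw [← aux_comm_eee b c hbc t (b z), ← aux_adj b hb (eee b c t z),
        aux_comm_eee b c hbc t z]
    rw [h1]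
    simp only [map_add, RCLike.reCLM_apply]
    rw [inner_self_eq_norm_sq (𝕜 := ℂ)]
    ring
  rw [hval] at hre2
  exact hre2

lemma psi_monotone (b c : E →L[ℂ] E) (hb : star b = b) (hbc : Commute b c) (z : E) :
    Monotone (psi b c z) := by
  have hdiff : ∀ t : ℝ, HasDerivAt (psi b c z) (4 * ‖eee b c t (b z)‖ ^ 2) t :=
    fun t => aux_hasDerivAt_psi b c hb hbc z t
  refine monotone_of_deriv_nonneg (fun t => (hdiff t).differentiableAt) (fun t => ?_)
  rw [(hdiff t).deriv]
  positivity

lemma exp_apply_of_apply_eq_zero (a : E →L[ℂ] E) (z : E) (h : a z = 0) :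
    exp a z = z := by
  have hsum : Summable fun n : ℕ => ((n ! : ℝ))⁻¹ • a ^ n := expSeries_summable' (𝕂 := ℝ) a
  have := ContinuousLinearMap.map_tsum
    (ContinuousLinearMap.restrictScalars ℝ ((ContinuousLinearMap.apply ℂ E) z)) hsum
  simp only [ContinuousLinearMap.coe_restrictScalars', ContinuousLinearMap.apply_apply,
    _root_.map_smul] at this
  rw [exp_eq_tsum ℝ]
  show (∑' n : ℕ, ((n ! : ℝ))⁻¹ • a ^ n) z = z
  rw [this, tsum_eq_single 0]
  · simp
  · intro n hn
    obtain ⟨m, rfl⟩ := Nat.exists_eq_succ_of_ne_zero hn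
    rw [pow_succ]
    simp [ContinuousLinearMap.mul_apply, h]

lemma eee_apply_of_ker (b c : E →L[ℂ] E) (hbc : Commute b c) (z : E) (h : b z = 0) (t : ℝ) :
    eee b c t z = exp c z := by
  have hsplit : eee b c t = exp c * exp (t • b) :=
    exp_add_of_commute (hbc.symm.smul_right t)
  rw [hsplit, ContinuousLinearMap.mul_apply,
    exp_apply_of_apply_eq_zero (t • b) z (by simp [h])]

lemma psi_eq_imp_bz_zero (b c : E →L[ℂ] E) (hb : star b = b) (hbc : Commute b c) (z : E)
    (h : psi b c z 0 = psi b c z 1) : b z = 0 := by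
  have hmono := psi_monotone b c hb hbc z
  have hconst : ∀ t ∈ Set.Icc (0 : ℝ) 1, psi b c z t = psi b c z 0 := fun t ht =>
    le_antisymm ((hmono ht.2).trans h.ge) (hmono ht.1)
  have hev : (psi b c z) =ᶠ[nhds (1 / 2 : ℝ)] fun _ => psi b c z 0 := by
    filter_upwards [Ioo_mem_nhds (by norm_num : (0 : ℝ) < 1 / 2) (by norm_num : (1 / 2 : ℝ) < 1)]
      with t ht
    exact hconst t ⟨le_of_lt ht.1, le_of_lt ht.2⟩
  have h1 : HasDerivAt (psi b c z) 0 (1 / 2) :=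
    (hasDerivAt_const (1 / 2 : ℝ) (psi b c z 0)).congr_of_eventuallyEq hev
  have h2 := aux_hasDerivAt_psi b c hb hbc z (1 / 2)
  have h3 : (4 : ℝ) * ‖eee b c (1 / 2) (b z)‖ ^ 2 = 0 := h2.unique h1
  have h4 : eee b c (1 / 2) (b z) = 0 := by
    have h5 : ‖eee b c (1 / 2) (b z)‖ ^ 2 = 0 := by linarith
    have h6 : ‖eee b c (1 / 2) (b z)‖ = 0 := pow_eq_zero_iff two_ne_zero |>.mp h5
    exact norm_eq_zero.mp h6
  obtain ⟨u, hu⟩ := NormedSpace.isUnit_exp (c + (1 / 2 : ℝ) • b)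
  have : (↑u⁻¹ * ↑u : E →L[ℂ] E) (b z) = (↑u⁻¹ : E →L[ℂ] E) 0 := by
    rw [ContinuousLinearMap.mul_apply]
    rw [show (↑u : E →L[ℂ] E) (b z) = eee b c (1 / 2) (b z) by rw [hu]; rfl, h4]
  simpa [u.inv_mul] using this

lemma div_norm_sq_le (K y : ℝ) (z : E) (hK : 0 ≤ K) (h : |y| ≤ K * ‖z‖ ^ 2) :
    |y / ‖z‖ ^ 2| ≤ K := by
  rcases eq_or_ne (‖z‖) 0 with h0 | h0
  · have hy : y = 0 := by
      rw [h0] at h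
      simp only [ne_eq, OfNat.ofNat_ne_zero, not_false_eq_true, zero_pow, mul_zero] at h
      exact abs_eq_zero.mp (le_antisymm h (abs_nonneg y))
    simp [hy, hK]
  · have hpos : 0 < ‖z‖ := (norm_nonneg z).lt_of_ne (Ne.symm h0)
    have hp2 : 0 < ‖z‖ ^ 2 := pow_pos hpos 2
    rw [abs_div, abs_of_nonneg (le_of_lt hp2), div_le_iff₀ hp2]
    exact h

lemma psi_bound (b c : E →L[ℂ] E) (M t : ℝ) (hM0 : 0 ≤ M) (hMt : ‖eee b c t‖ ≤ M) (z : E) :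
    |psi b c z t| ≤ (2 * M ^ 2 * ‖b‖) * ‖z‖ ^ 2 := by
  have h1 : ‖eee b c t z‖ ≤ M * ‖z‖ :=
    ((eee b c t).le_opNorm z).trans (mul_le_mul_of_nonneg_right hMt (norm_nonneg z))
  have h2 : ‖eee b c t (b z)‖ ≤ M * (‖b‖ * ‖z‖) :=
    ((eee b c t).le_opNorm (b z)).trans
      (mul_le_mul hMt (b.le_opNorm z) (norm_nonneg _) hM0)
  have h3 : |psi b c z t| ≤ 2 * (‖eee b c t z‖ * ‖eee b c t (b z)‖) := by
    rw [psi, abs_mul, abs_two]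
    refine mul_le_mul_of_nonneg_left ?_ (by norm_num)
    exact (RCLike.abs_re_le_norm _).trans (norm_inner_le_norm _ _)
  have h4 : ‖eee b c t z‖ * ‖eee b c t (b z)‖ ≤ (M * ‖z‖) * (M * (‖b‖ * ‖z‖)) :=
    mul_le_mul h1 h2 (norm_nonneg _) (by positivity)
  calc |psi b c z t| ≤ 2 * ((M * ‖z‖) * (M * (‖b‖ * ‖z‖))) := by linarith
    _ = (2 * M ^ 2 * ‖b‖) * ‖z‖ ^ 2 := by ring

lemma normsq_bound (b c : E →L[ℂ] E) (M t : ℝ) (hMt : ‖eee b c t‖ ≤ M) (z : E) :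
    |‖eee b c t z‖ ^ 2| ≤ (M ^ 2) * ‖z‖ ^ 2 := by
  have h1 : ‖eee b c t z‖ ≤ M * ‖z‖ :=
    ((eee b c t).le_opNorm z).trans (mul_le_mul_of_nonneg_right hMt (norm_nonneg z))
  rw [abs_of_nonneg (by positivity)]
  calc ‖eee b c t z‖ ^ 2 ≤ (M * ‖z‖) ^ 2 := pow_le_pow_left₀ (norm_nonneg _) h1 2
    _ = M ^ 2 * ‖z‖ ^ 2 := by ring

lemma aux_main_deriv (b c : E →L[ℂ] E) (hb : star b = b) (hbc : Commute b c)
    [MeasurableSpace E] [BorelSpace E] (μ : Measure E) [IsFiniteMeasure μ] (t₀ : ℝ) :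
    Integrable (fun z => psi b c z t₀ / ‖z‖ ^ 2) μ ∧
      HasDerivAt (fun t => ∫ z, ‖eee b c t z‖ ^ 2 / ‖z‖ ^ 2 ∂μ)
        (∫ z, psi b c z t₀ / ‖z‖ ^ 2 ∂μ) t₀ := by
  have hdiff : Differentiable ℝ fun s : ℝ => eee b c s :=
    fun t => (aux_hasDerivAt_exp b c hbc t).differentiableAt
  have hcont : Continuous fun t : ℝ => eee b c t := hdiff.continuous
  obtain ⟨M, hM⟩ := (isCompact_Icc (a := t₀ - 1) (b := t₀ + 1)).exists_bound_of_continuousOn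
    hcont.continuousOn
  have hM0 : 0 ≤ M := le_trans (norm_nonneg _) (hM t₀ ⟨by linarith, by linarith⟩)
  have hball : Metric.ball t₀ 1 ⊆ Set.Icc (t₀ - 1) (t₀ + 1) := by
    rw [Real.ball_eq_Ioo]
    exact Set.Ioo_subset_Icc_self
  have hmeas : ∀ t : ℝ, AEStronglyMeasurable (fun z => ‖eee b c t z‖ ^ 2 / ‖z‖ ^ 2) μ :=
    fun t => ((((eee b c t).continuous.norm.pow 2).measurable).div
      ((continuous_norm.pow 2).measurable)).aestronglyMeasurable
  have h := hasDerivAt_integral_of_dominated_loc_of_deriv_le (μ := μ)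
    (F := fun t z => ‖eee b c t z‖ ^ 2 / ‖z‖ ^ 2)
    (F' := fun t z => psi b c z t / ‖z‖ ^ 2)
    (bound := fun _ => 2 * M ^ 2 * ‖b‖)
    (x₀ := t₀) (s := Metric.ball t₀ 1) (Metric.ball_mem_nhds t₀ one_pos)
    (Filter.Eventually.of_forall fun t => hmeas t)
    ?_ ?_ ?_ ?_ ?_
  · exact h
  · refine (integrable_const (M ^ 2)).mono' (hmeas t₀) (ae_of_all _ fun z => ?_)
    rw [Real.norm_eq_abs]
    exact div_norm_sq_le (M ^ 2) _ z (by positivity)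
      (normsq_bound b c M t₀ (hM t₀ ⟨by linarith, by linarith⟩) z)
  · refine Measurable.aestronglyMeasurable (Measurable.div ?_ ((continuous_norm.pow 2).measurable))
    refine Continuous.measurable ?_
    exact continuous_const.mul (RCLike.continuous_re.comp
      (Continuous.inner ((eee b c t₀).continuous) ((eee b c t₀).continuous.comp b.continuous)))
  · refine ae_of_all _ fun z t ht => ?_
    rw [Real.norm_eq_abs]
    exact div_norm_sq_le _ _ z (by positivity)
      (psi_bound b c M t hM0 (hM t (hball ht)) z)
  · exact integrable_const _
  · refine ae_of_all _ fun z t _ => ?_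
    exact (aux_hasDerivAt_normsq b c hbc z t).div_const _

end aux

/-- let `B`, `C` be commuting Hermitian matrices and `μ` a finite Borel
measure on `ℂⁿ` with `μ {0} = 0`. If `g(t) = ∫ ‖exp (C + t • B) z‖² / ‖z‖² dμ(z)` has
derivative `0` both at `t = 0` and at `t = 1`, then `B z = 0` for `μ`-almost every `z`,
and consequently `g` is constant on `ℝ`. -/
theorem ae_eq_zero_and_const_of_two_critical_points
    (n : ℕ) (B C : Matrix (Fin n) (Fin n) ℂ) (hB : Bᴴ = B) (hC : Cᴴ = C)
    (hBC : B * C = C * B)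
    [MeasurableSpace (EuclideanSpace ℂ (Fin n))] [BorelSpace (EuclideanSpace ℂ (Fin n))]
    (μ : Measure (EuclideanSpace ℂ (Fin n))) [IsFiniteMeasure μ]
    (hμ0 : μ {0} = 0)
    (g : ℝ → ℝ)
    (hg : ∀ t : ℝ, g t = ∫ z : EuclideanSpace ℂ (Fin n),
      ‖Matrix.toEuclideanLin (NormedSpace.exp (C + t • B)) z‖ ^ 2 / ‖z‖ ^ 2 ∂μ)
    (h0 : HasDerivAt g 0 0) (h1 : HasDerivAt g 0 1) :
    (∀ᵐ z ∂μ, Matrix.toEuclideanLin B z = 0) ∧ ∀ t : ℝ, g t = g 0 := by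
  set tc : Matrix (Fin n) (Fin n) ℂ ≃⋆ₐ[ℂ]
      (EuclideanSpace ℂ (Fin n) →L[ℂ] EuclideanSpace ℂ (Fin n)) :=
    Matrix.toEuclideanCLM with htc
  set b := tc B with hbdef
  set c := tc C with hcdef
  have hcontCLM : Continuous tc :=
    (AddMonoidHomClass.isometry_of_norm tc fun a => (Matrix.cstar_norm_def a).symm).continuous
  have hb : star b = b := by rw [hbdef, ← map_star, Matrix.star_eq_conjTranspose, hB]
  have hbc : Commute b c := by
    unfold Commute SemiconjBy
    rw [hbdef, hcdef, ← _root_.map_mul, ← _root_.map_mul, hBC]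
  -- translation of the integrand
  have htrans : ∀ (t : ℝ) (z : EuclideanSpace ℂ (Fin n)),
      Matrix.toEuclideanLin (NormedSpace.exp (C + t • B)) z = eee b c t z := by
    intro t z
    have h1 : NormedSpace.exp (C + t • B) = exp (C + t • B) := by
      rfl
    have h2 : tc (exp (C + t • B)) = exp (tc (C + t • B)) :=
      letI : NormedAlgebra ℚ (Matrix (Fin n) (Fin n) ℂ) := .restrictScalars ℚ ℂ _
      map_exp tc hcontCLM _
    have h3 : tc (C + t • B) = c + t • b := by
      rw [map_add, ← Complex.coe_smul, _root_.map_smul]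
      exact congrArg (fun y => tc C + y) (Complex.coe_smul t (tc B))
    show tc (NormedSpace.exp (C + t • B)) z = eee b c t z
    rw [h1, h2, h3]
    rfl
  have hgF : ∀ t : ℝ, g t = ∫ z, ‖eee b c t z‖ ^ 2 / ‖z‖ ^ 2 ∂μ := by
    intro t
    rw [hg t]
    congr 1
    funext z
    rw [htrans t z]
  have key0 := aux_main_deriv b c hb hbc μ 0
  have key1 := aux_main_deriv b c hb hbc μ 1
  have hgfun : g = fun t => ∫ z, ‖eee b c t z‖ ^ 2 / ‖z‖ ^ 2 ∂μ := funext hgF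
  have e0 : (0 : ℝ) = ∫ z, psi b c z 0 / ‖z‖ ^ 2 ∂μ := h0.unique (hgfun ▸ key0.2)
  have e1 : (0 : ℝ) = ∫ z, psi b c z 1 / ‖z‖ ^ 2 ∂μ := h1.unique (hgfun ▸ key1.2)
  have hzero : ∫ z, (psi b c z 1 / ‖z‖ ^ 2 - psi b c z 0 / ‖z‖ ^ 2) ∂μ = 0 := by
    rw [integral_sub key1.1 key0.1, ← e1, ← e0, sub_zero]
  have hnn : ∀ z, 0 ≤ psi b c z 1 / ‖z‖ ^ 2 - psi b c z 0 / ‖z‖ ^ 2 := by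
    intro z
    have hmono := psi_monotone b c hb hbc z (by norm_num : (0 : ℝ) ≤ 1)
    have h2 : psi b c z 0 / ‖z‖ ^ 2 ≤ psi b c z 1 / ‖z‖ ^ 2 := by
      rw [div_eq_mul_inv, div_eq_mul_inv]
      exact mul_le_mul_of_nonneg_right hmono (by positivity)
    linarith
  have hae := (integral_eq_zero_iff_of_nonneg hnn (key1.1.sub key0.1)).mp hzero
  have hne : ∀ᵐ z ∂μ, z ≠ 0 := by
    rw [ae_iff]
    have : {z : EuclideanSpace ℂ (Fin n) | ¬ z ≠ 0} = {0} := by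
      ext z; simp [not_not]
    rw [this]
    exact hμ0
  have hbz : ∀ᵐ z ∂μ, b z = 0 := by
    filter_upwards [hae, hne] with z hz1 hz2
    have hd : psi b c z 1 / ‖z‖ ^ 2 - psi b c z 0 / ‖z‖ ^ 2 = 0 := hz1
    have hnz : (‖z‖ : ℝ) ^ 2 ≠ 0 := by
      have : ‖z‖ ≠ 0 := fun h => hz2 (norm_eq_zero.mp h)
      positivity
    have heq : psi b c z 0 = psi b c z 1 := by
      field_simp at hd
      linarith
    exact psi_eq_imp_bz_zero b c hb hbc z heq
  constructor
  · filter_upwards [hbz] with z hz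
    exact hz
  · intro t
    rw [hgF t, hgF 0]
    apply integral_congr_ae
    filter_upwards [hbz] with z hz
    rw [eee_apply_of_ker b c hbc z hz t, eee_apply_of_ker b c hbc z hz 0]
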